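/- The birational transformation h:(x:y:z) ⇢ (xy : y(x−z) : x(y−z)) of ℙ² has order 5, and its fixed points in ℙ² are exactly the two points (ζ+1 : ζ : 1) with ζ² − ζ − 1 = 0. -/

import Mathlib

set_option maxHeartbeats 1000000
set_option synthInstance.maxHeartbeats 400000

noncomputable section

/-- The function field `ℂ(x,y)` of the plane. -/
abbrev Kfield := FractionRing (MvPolynomial (Fin 2) ℂ)

/-- The inclusion of polynomials into `ℂ(x,y)`. -/
def ι : MvPolynomial (Fin 2) ℂ →+* Kfield := algebraMap _ _

/-- The first affine coordinate `x`. -/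
def Xv : Kfield := ι (MvPolynomial.X 0)

/-- The second affine coordinate `y`. -/
def Yv : Kfield := ι (MvPolynomial.X 1)

lemma ι_inj : Function.Injective ι :=
  IsFractionRing.injective (MvPolynomial (Fin 2) ℂ) Kfield

lemma ι_ne_zero {p : MvPolynomial (Fin 2) ℂ} (hp : p ≠ 0) : ι p ≠ 0 :=
  fun h => hp (ι_inj (by rw [h, map_zero]))

lemma hXne : Xv ≠ 0 := ι_ne_zero (MvPolynomial.X_ne_zero _)

lemma hYne : Yv ≠ 0 := ι_ne_zero (MvPolynomial.X_ne_zero _)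

lemma hX1ne : Xv - 1 ≠ 0 := by
  have h : Xv - 1 = ι (MvPolynomial.X 0 - 1) := by rw [map_sub, map_one]; rfl
  rw [h]
  apply ι_ne_zero
  intro h'
  have := congrArg (MvPolynomial.eval ![(0 : ℂ), 0]) h'
  simp at this

lemma hY1ne : Yv - 1 ≠ 0 := by
  have h : Yv - 1 = ι (MvPolynomial.X 1 - 1) := by rw [map_sub, map_one]; rfl
  rw [h]
  apply ι_ne_zero
  intro h'
  have := congrArg (MvPolynomial.eval ![(0 : ℂ), 0]) h'
  simp at this

lemma hXYne : Xv - Yv ≠ 0 := by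
  have h : Xv - Yv = ι (MvPolynomial.X 0 - MvPolynomial.X 1) := by rw [map_sub]; rfl
  rw [h]
  apply ι_ne_zero
  intro h'
  have := congrArg (MvPolynomial.eval ![(1 : ℂ), 0]) h'
  simp at this

/-- The quadratic birational map `h : (x:y:z) ⇢ (xy : y(x−z) : x(y−z))` of `ℙ²` — which in the
affine chart `z = 1` corresponds to the `ℂ`-automorphism `σ : x ↦ y/(y−1), y ↦ y(x−1)/(x(y−1))`
of `ℂ(x,y)` — has order `5`, and its fixed points in `ℙ²` (points outside the base locus, i.e.
with nonzero image vector, that are sent to a nonzero multiple of themselves) are exactly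
the two points `(ζ+1 : ζ : 1)` with `ζ² − ζ − 1 = 0`. -/
theorem stmt_10 (σ : RingAut Kfield)
    (hc : ∀ c : ℂ, σ (ι (MvPolynomial.C c)) = ι (MvPolynomial.C c))
    (hx : σ Xv = Yv / (Yv - 1))
    (hy : σ Yv = Yv * (Xv - 1) / (Xv * (Yv - 1))) :
    orderOf σ = 5 ∧
    ∀ v : Fin 3 → ℂ, v ≠ 0 →
      (![v 0 * v 1, v 1 * (v 0 - v 2), v 0 * (v 1 - v 2)] : Fin 3 → ℂ) ≠ 0 →
      ((∃ c : ℂ, c ≠ 0 ∧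
          (![v 0 * v 1, v 1 * (v 0 - v 2), v 0 * (v 1 - v 2)] : Fin 3 → ℂ) = c • v) ↔
        ∃ ζ : ℂ, ζ ^ 2 - ζ - 1 = 0 ∧ ∃ c : ℂ, c ≠ 0 ∧ v = c • ![ζ + 1, ζ, 1]) := by
  have hX := hXne; have hY := hYne; have hX1 := hX1ne; have hY1 := hY1ne
  have hXY := hXYne
  constructor
  · -- order of σ is 5
    -- values of σ on useful expressions
    have ha1 : σ Xv - 1 = 1 / (Yv - 1) := by
      rw [hx, div_sub_one hY1]
      congr 1
      ring
    have hb1 : σ Yv - 1 = (Xv - Yv) / (Xv * (Yv - 1)) := by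
      rw [hy, div_sub_one (mul_ne_zero hX hY1)]
      congr 1
      ring
    have hab : σ Xv - σ Yv = Yv / (Xv * (Yv - 1)) := by
      rw [hx, hy, div_sub_div _ _ hY1 (mul_ne_zero hX hY1),
        div_eq_div_iff (mul_ne_zero hY1 (mul_ne_zero hX hY1)) (mul_ne_zero hX hY1)]
      ring
    -- second iterate
    have hx2 : σ (σ Xv) = Yv * (Xv - 1) / (Xv - Yv) := by
      rw [hx, map_div₀, map_sub, map_one, hb1, hy]
      field_simp
    have hy2 : σ (σ Yv) = (Xv - 1) / (Xv - Yv) := by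
      rw [hy, map_div₀, map_mul, map_sub, map_one, map_mul, map_sub, map_one,
        ha1, hb1, hx, hy]
      field_simp
    -- third iterate
    have hx3 : σ (σ (σ Xv)) = (Xv - 1) / (Yv - 1) := by
      rw [hx2, map_div₀, map_mul, map_sub, map_sub, map_one, hab, ha1, hy]
      field_simp
    have hy3 : σ (σ (σ Yv)) = Xv / Yv := by
      rw [hy2, map_div₀, map_sub, map_sub, map_one, hab, ha1]
      field_simp
    -- fourth iterate
    have hx4 : σ (σ (σ (σ Xv)))  = Xv / (Xv - Yv) := by
      rw [hx3, map_div₀, map_sub, map_sub, map_one, ha1, hb1]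
      field_simp
    have hy4 : σ (σ (σ (σ Yv))) = Xv / (Xv - 1) := by
      rw [hy3, map_div₀, hx, hy]
      field_simp
    -- fifth iterate : identity on generators
    have hx5 : σ (σ (σ (σ (σ Xv)))) = Xv := by
      rw [hx4, map_div₀, map_sub, hab, hx]
      field_simp
    have hy5 : σ (σ (σ (σ (σ Yv)))) = Yv := by
      rw [hy4, map_div₀, map_sub, map_one, ha1, hx]
      field_simp
    -- extend to all elements
    have hcomp : ∀ p : MvPolynomial (Fin 2) ℂ, σ (σ (σ (σ (σ (ι p))))) = ι p := by
      intro p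
      induction p using MvPolynomial.induction_on with
      | C c => rw [hc, hc, hc, hc, hc]
      | add p q hp hq => rw [map_add, map_add, map_add, map_add, map_add, map_add, hp, hq]
      | mul_X p i hp =>
        rw [map_mul, map_mul, map_mul, map_mul, map_mul, map_mul, hp]
        congr 1
        fin_cases i
        · exact hx5
        · exact hy5
    have hall : ∀ z : Kfield, σ (σ (σ (σ (σ z)))) = z := by
      intro z
      obtain ⟨⟨a, s⟩, h⟩ := IsLocalization.surj
        (nonZeroDivisors (MvPolynomial (Fin 2) ℂ)) z
      have hs : ι (s : MvPolynomial (Fin 2) ℂ) ≠ 0 :=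
        ι_ne_zero (nonZeroDivisors.ne_zero s.2)
      have h' : z * ι (s : MvPolynomial (Fin 2) ℂ) = ι a := h
      have h2 := congrArg (fun t => σ (σ (σ (σ (σ t))))) h'
      simp only [map_mul] at h2
      rw [hcomp, hcomp] at h2
      exact mul_right_cancel₀ hs (h2.trans h'.symm)
    have h5 : σ ^ 5 = 1 := by
      ext z
      show (σ ^ 5) z = z
      have : (σ ^ 5) z = σ (σ (σ (σ (σ z)))) := by
        rw [pow_succ, pow_succ, pow_succ, pow_succ, pow_one]
        rfl
      rw [this, hall]
    have hne : σ ≠ 1 := by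
      intro h
      rw [h] at hx
      replace hx : Xv = Yv / (Yv - 1) := hx
      have h1 : Xv * (Yv - 1) = Yv := by
        rw [hx]
        field_simp
      have h2 : (MvPolynomial.X 0 * (MvPolynomial.X 1 - 1) : MvPolynomial (Fin 2) ℂ)
          = MvPolynomial.X 1 := by
        apply ι_inj
        rw [map_mul, map_sub, map_one]
        exact h1
      have := congrArg (MvPolynomial.eval ![(0 : ℂ), 1]) h2
      simp at this
    haveI : Fact (Nat.Prime 5) := ⟨by norm_num⟩
    exact orderOf_eq_prime h5 hne
  · -- fixed points
    intro v hv hb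
    constructor
    · rintro ⟨c, hc0, heq⟩
      have h0 : v 0 * v 1 = c * v 0 := by
        have := congrFun heq 0; simpa using this
      have h1 : v 1 * (v 0 - v 2) = c * v 1 := by
        have := congrFun heq 1; simpa using this
      have h2 : v 0 * (v 1 - v 2) = c * v 2 := by
        have := congrFun heq 2; simpa using this
      have hv0 : v 0 ≠ 0 := by
        intro e0
        have e2 : v 2 = 0 := by
          have : c * v 2 = 0 := by rw [← h2, e0]; ring
          rcases mul_eq_zero.1 this with h | h
          · exact absurd h hc0
          · exact h
        have e1 : v 1 = 0 := by
          have : c * v 1 = 0 := by rw [← h1, e0, e2]; ring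
          rcases mul_eq_zero.1 this with h | h
          · exact absurd h hc0
          · exact h
        exact hv (funext fun i => by fin_cases i <;> assumption)
      have hcv1 : v 1 = c :=
        mul_left_cancel₀ hv0 (by linear_combination h0 : v 0 * v 1 = v 0 * c)
      have hv1 : v 1 ≠ 0 := hcv1 ▸ hc0
      have hsum : v 0 - v 2 = v 1 := by
        apply mul_left_cancel₀ hv1
        rw [h1, hcv1]
      have hv2 : v 2 ≠ 0 := by
        intro e2
        rw [e2, sub_zero] at hsum
        rw [e2, sub_zero, mul_zero] at h2
        exact mul_ne_zero hv0 hv1 h2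
      refine ⟨v 1 / v 2, ?_, v 2, hv2, ?_⟩
      · have h0' : v 0 = v 1 + v 2 := by linear_combination hsum
        have h2' : v 0 * (v 1 - v 2) = v 1 * v 2 := by rw [h2, ← hcv1]
        have key : v 1 ^ 2 - v 1 * v 2 - v 2 ^ 2 = 0 := by
          linear_combination h2' - (v 1 - v 2) * h0'
        have expand : (v 1 / v 2) ^ 2 - v 1 / v 2 - 1
            = (v 1 ^ 2 - v 1 * v 2 - v 2 ^ 2) / v 2 ^ 2 := by
          rw [div_pow, div_sub_div _ _ (pow_ne_zero 2 hv2) hv2, div_sub_one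
            (mul_ne_zero (pow_ne_zero 2 hv2) hv2), div_eq_div_iff
            (mul_ne_zero (pow_ne_zero 2 hv2) hv2) (pow_ne_zero 2 hv2)]
          ring
        rw [expand, key, zero_div]
      · funext i
        fin_cases i
        · show v 0 = v 2 * (v 1 / v 2 + 1)
          field_simp
          linear_combination hsum
        · show v 1 = v 2 * (v 1 / v 2)
          field_simp
        · show v 2 = v 2 * 1
          ring
    · rintro ⟨ζ, hζ, c, hc0, hveq⟩
      have hζ0 : ζ ≠ 0 := by
        intro h
        rw [h] at hζ
        norm_num at hζ
      have e0 : v 0 = c * (ζ + 1) := by rw [hveq]; simp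
      have e1 : v 1 = c * ζ := by rw [hveq]; simp
      have e2 : v 2 = c * 1 := by rw [hveq]; simp
      refine ⟨c * ζ, mul_ne_zero hc0 hζ0, ?_⟩
      funext i
      fin_cases i
      · show v 0 * v 1 = c * ζ * v 0
        rw [e0, e1]; ring
      · show v 1 * (v 0 - v 2) = c * ζ * v 1
        rw [e0, e1, e2]; ring
      · show v 0 * (v 1 - v 2) = c * ζ * v 2
        rw [e0, e1, e2]
        linear_combination c ^ 2 * hζ

end
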